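/- Let c ∈ ℝ^m with c ≥ 0, and for each ℓ ∈ ℕ let g_ℓ : [0,∞)^m → ℝ be non-decreasing (in the componentwise order) in y, converging pointwise as ℓ → ∞ to a continuous, strictly increasing function g. Define v* = sup{c^T y : g(y) ≤ 1, y ≥ 0} and v_ℓ = sup{c^T y : g_ℓ(y) ≤ 1, y ≥ 0}. Then v_ℓ → v* as ℓ → ∞ (where v* may be +∞, in which case v_ℓ → +∞). -/

import Mathlib

open Filter Topology

set_option maxHeartbeats 1000000

/-- convergence of optimal values under pointwise convergence of
monotone constraint functions. -/
theorem stmt_0 (m : ℕ) (c : Fin m → ℝ) (hc : 0 ≤ c)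
    (g : ℕ → (Fin m → ℝ) → ℝ) (glim : (Fin m → ℝ) → ℝ)
    (hmono : ∀ ℓ : ℕ, ∀ y y' : Fin m → ℝ, 0 ≤ y → y ≤ y' → g ℓ y ≤ g ℓ y')
    (hconv : ∀ y : Fin m → ℝ, 0 ≤ y →
      Tendsto (fun ℓ => g ℓ y) atTop (𝓝 (glim y)))
    (hcont : ContinuousOn glim {y | 0 ≤ y})
    (hstrict : ∀ y y' : Fin m → ℝ, 0 ≤ y → y ≤ y' → y ≠ y' → glim y < glim y') :
    Tendsto
      (fun ℓ => ⨆ y ∈ {y : Fin m → ℝ | 0 ≤ y ∧ g ℓ y ≤ 1},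
        ENNReal.ofReal (∑ i, c i * y i))
      atTop
      (𝓝 (⨆ y ∈ {y : Fin m → ℝ | 0 ≤ y ∧ glim y ≤ 1},
        ENNReal.ofReal (∑ i, c i * y i))) := by
  set val : (Fin m → ℝ) → ENNReal := fun y => ENNReal.ofReal (∑ i, c i * y i) with hvaldef
  set v : ℕ → ENNReal := fun ℓ => ⨆ y ∈ {y : Fin m → ℝ | 0 ≤ y ∧ g ℓ y ≤ 1}, val y with hvdef
  set vstar : ENNReal := ⨆ y ∈ {y : Fin m → ℝ | 0 ≤ y ∧ glim y ≤ 1}, val y with hvsdef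
  -- key : a limit along constraints lemma
  have key : ∀ (L : ℕ → ℕ), Tendsto L atTop atTop → ∀ w : Fin m → ℝ, 0 ≤ w →
      (∃ᶠ k in atTop, g (L k) w ≤ 1) → glim w ≤ 1 := by
    intro L hL w hw hfreq
    by_contra h
    push_neg at h
    have hT : Tendsto (fun k => g (L k) w) atTop (𝓝 (glim w)) := (hconv w hw).comp hL
    have hev : ∀ᶠ k in atTop, 1 < g (L k) w := hT.eventually (eventually_gt_nhds h)
    obtain ⟨k, h1, h2⟩ := (hfreq.and_eventually hev).exists
    exact absurd h1 (not_le.2 h2)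
  refine tendsto_of_le_liminf_of_limsup_le ?_ ?_ (by isBoundedDefault) (by isBoundedDefault)
  · -- vstar ≤ liminf v
    refine iSup₂_le fun y hy => ?_
    obtain ⟨hy0, hyg⟩ := hy
    refine le_of_forall_lt fun b hb => ?_
    have hbtop : b ≠ ⊤ := (hb.trans ENNReal.ofReal_lt_top).ne
    have hcy : 0 < ∑ i, c i * y i := by
      by_contra h
      push_neg at h
      rw [show val y = 0 from ENNReal.ofReal_eq_zero.mpr h] at hb
      simp at hb
    have hbr : b.toReal < ∑ i, c i * y i :=
      (ENNReal.lt_ofReal_iff_toReal_lt hbtop).mp hb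
    set S := ∑ i, c i * y i with hS
    set t : ℝ := (b.toReal / S + 1) / 2 with ht
    have hb0 : 0 ≤ b.toReal := ENNReal.toReal_nonneg
    have ht0 : 0 < t := by
      have : 0 ≤ b.toReal / S := div_nonneg hb0 hcy.le
      rw [ht]; linarith
    have ht1 : t < 1 := by
      have : b.toReal / S < 1 := (div_lt_one hcy).mpr hbr
      rw [ht]; linarith
    have htb : b.toReal < t * S := by
      have : t * S = (b.toReal + S) / 2 := by
        rw [ht]; field_simp
      rw [this]; linarith
    set z : Fin m → ℝ := fun i => t * y i with hz
    have hz0 : (0 : Fin m → ℝ) ≤ z := fun i => mul_nonneg ht0.le (hy0 i)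
    have hzy : z ≤ y := fun i => mul_le_of_le_one_left (hy0 i) ht1.le
    have hzne : z ≠ y := by
      obtain ⟨i, hi⟩ : ∃ i, 0 < y i := by
        by_contra h
        push_neg at h
        have : S ≤ 0 := Finset.sum_nonpos fun i _ =>
          mul_nonpos_of_nonneg_of_nonpos (hc i) (h i)
        linarith
      intro he
      have := congrFun he i
      simp only [hz] at this
      nlinarith
    have hglt : glim z < 1 := lt_of_lt_of_le (hstrict z y hz0 hzy hzne) hyg
    have hev : ∀ᶠ ℓ in atTop, g ℓ z ≤ 1 :=
      ((hconv z hz0).eventually (eventually_lt_nhds hglt)).mono fun ℓ h => le_of_lt h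
    have hcz : ∑ i, c i * z i = t * S := by
      rw [hS, Finset.mul_sum]
      exact Finset.sum_congr rfl fun i _ => by rw [hz]; ring
    have hle : ∀ᶠ ℓ in atTop, ENNReal.ofReal (t * S) ≤ v ℓ := by
      refine hev.mono fun ℓ h => ?_
      have : val z ≤ v ℓ := le_biSup _ ⟨hz0, h⟩
      rw [← hcz]
      exact this
    have hlim : ENNReal.ofReal (t * S) ≤ liminf v atTop :=
      le_liminf_of_le (by isBoundedDefault) hle
    refine lt_of_lt_of_le ?_ hlim
    exact (ENNReal.lt_ofReal_iff_toReal_lt hbtop).mpr htb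
  · -- limsup v ≤ vstar
    by_contra hcon
    push_neg at hcon
    obtain ⟨α, hα1, hα2⟩ := exists_between hcon
    have hαtop : α ≠ ⊤ := (hα2.trans_le le_top).ne
    have hvstop : vstar ≠ ⊤ := (hα1.trans hαtop.lt_top).ne
    have hfreq : ∃ᶠ ℓ in atTop, α < v ℓ :=
      frequently_lt_of_lt_limsup (by isBoundedDefault) hα2
    have hsel : ∀ N : ℕ, ∃ ℓ, N ≤ ℓ ∧ ∃ y : Fin m → ℝ,
        0 ≤ y ∧ g ℓ y ≤ 1 ∧ α < val y := by
      intro N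
      obtain ⟨ℓ, hℓN, hℓ⟩ := frequently_atTop.mp hfreq N
      rw [hvdef] at hℓ
      simp only [lt_iSup_iff, Set.mem_setOf_eq] at hℓ
      obtain ⟨y, ⟨h1, h2⟩, h3⟩ := hℓ
      exact ⟨ℓ, hℓN, y, h1, h2, h3⟩
    choose L hLge Y hY0 hYg hYval using hsel
    have hL : Tendsto L atTop atTop := tendsto_atTop_mono hLge tendsto_id
    set A := α.toReal with hA
    have hA0 : 0 < A := ENNReal.toReal_pos (pos_of_gt hα1).ne' hαtop
    have hAv : ∀ N, A < ∑ i, c i * Y N i := fun N =>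
      (ENNReal.lt_ofReal_iff_toReal_lt hαtop).mp (hYval N)
    by_cases hub : ∃ i, c i ≠ 0 ∧ ∀ R : ℝ, ∃ᶠ N in atTop, R < Y N i
    · -- unbounded case
      obtain ⟨i, hci, hfr⟩ := hub
      have hci' : 0 < c i := lt_of_le_of_ne (hc i) (Ne.symm hci)
      set R := (vstar.toReal + 1) / c i with hR
      have hR0 : 0 ≤ R := div_nonneg (by positivity) hci'.le
      set w : Fin m → ℝ := fun j => if j = i then R else 0 with hw
      have hw0 : (0 : Fin m → ℝ) ≤ w := fun j => by
        rw [hw]; dsimp only; split <;> simp [hR0]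
      have hfreq2 : ∃ᶠ N in atTop, g (L N) w ≤ 1 := by
        refine (hfr R).mono fun N hN => ?_
        refine le_trans (hmono (L N) w (Y N) hw0 fun j => ?_) (hYg N)
        rw [hw]; dsimp only
        split
        · rename_i hji; subst hji; exact hN.le
        · exact hY0 N j
      have hglw : glim w ≤ 1 := key L hL w hw0 hfreq2
      have hvw : val w ≤ vstar := le_biSup _ ⟨hw0, hglw⟩
      have hsum : ∑ j, c j * w j = c i * R := by
        rw [hw]
        simp only [mul_ite, mul_zero]
        rw [Finset.sum_ite_eq' Finset.univ i (fun j => c j * R)]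
        simp
      have hciR : c i * R = vstar.toReal + 1 := by
        rw [hR]; field_simp
      have : vstar < val w := by
        rw [hvaldef]; dsimp only
        rw [hsum, hciR]
        exact (ENNReal.lt_ofReal_iff_toReal_lt hvstop).mpr (by linarith)
      exact absurd hvw (not_le.2 this)
    · -- bounded case
      push_neg at hub
      choose! Rb hRb using hub
      set R0 : ℝ := ∑ j, |Rb j| with hR0def
      have hR0nn : 0 ≤ R0 := Finset.sum_nonneg fun j _ => abs_nonneg _
      have hRble : ∀ j, Rb j ≤ R0 := fun j =>
        le_trans (le_abs_self _) (Finset.single_le_sum (f := fun j => |Rb j|)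
          (fun j _ => abs_nonneg _) (Finset.mem_univ j))
      set z : ℕ → Fin m → ℝ := fun N i => if c i = 0 then 0 else Y N i with hzdef
      have hz0 : ∀ N, (0 : Fin m → ℝ) ≤ z N := fun N i => by
        rw [hzdef]; dsimp only; split
        · exact le_refl _
        · exact hY0 N i
      have hzle : ∀ N, z N ≤ Y N := fun N i => by
        rw [hzdef]; dsimp only; split
        · exact hY0 N i
        · exact le_refl _
      have hgz : ∀ N, g (L N) (z N) ≤ 1 := fun N =>
        (hmono _ _ _ (hz0 N) (hzle N)).trans (hYg N)
      have hcz : ∀ N, ∑ i, c i * z N i = ∑ i, c i * Y N i := fun N =>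
        Finset.sum_congr rfl fun i _ => by
          rw [hzdef]; dsimp only; split
          · rename_i h; rw [h]; ring
          · rfl
      have hevB : ∀ᶠ N in atTop, ∀ i, z N i ≤ R0 := by
        rw [eventually_all]
        intro i
        by_cases hci : c i = 0
        · exact Eventually.of_forall fun N => by
            rw [hzdef]; simp [hci, hR0nn]
        · refine (hRb i hci).mono fun N h => ?_
          rw [hzdef]; simp only [hci, if_false]
          exact h.trans (hRble i)
      obtain ⟨N₀, hN₀⟩ := eventually_atTop.mp hevB
      set x : ℕ → Fin m → ℝ := fun k => z (k + N₀) with hxdef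
      have hxmem : ∀ k, x k ∈ Set.Icc (0 : Fin m → ℝ) (fun _ => R0) :=
        fun k => ⟨hz0 _, fun i => hN₀ (k + N₀) (Nat.le_add_left _ _) i⟩
      have hbd : Bornology.IsBounded (Set.Icc (0 : Fin m → ℝ) (fun _ => R0)) :=
        isCompact_Icc.isBounded
      obtain ⟨a, hamem, φ, hφ, hconv'⟩ := tendsto_subseq_of_bounded hbd hxmem
      rw [isClosed_Icc.closure_eq] at hamem
      have ha0 : (0 : Fin m → ℝ) ≤ a := hamem.1
      have hφ' : Tendsto (fun k => φ k + N₀) atTop atTop :=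
        tendsto_atTop_mono (fun k => le_trans hφ.le_apply (Nat.le_add_right _ _))
          tendsto_id
      have hL' : Tendsto (fun k => L (φ k + N₀)) atTop atTop := hL.comp hφ'
      have hxc : ∀ i, Tendsto (fun k => x (φ k) i) atTop (𝓝 (a i)) :=
        fun i => tendsto_pi_nhds.mp hconv' i
      have hca : A ≤ ∑ i, c i * a i := by
        have h1 : Tendsto (fun k => ∑ i, c i * x (φ k) i) atTop
            (𝓝 (∑ i, c i * a i)) :=
          tendsto_finset_sum _ fun i _ => (hxc i).const_mul (c i)
        refine ge_of_tendsto h1 (Eventually.of_forall fun k => ?_)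
        have := hAv (φ k + N₀)
        rw [← hcz (φ k + N₀)] at this
        exact this.le
      set V := vstar.toReal with hV
      have hV0 : 0 ≤ V := ENNReal.toReal_nonneg
      have hVA : V < A := by
        rw [hV, hA]
        exact ENNReal.toReal_lt_toReal hvstop hαtop |>.mpr hα1
      set t : ℝ := (V / A + 1) / 2 with htdef
      have ht0 : 0 < t := by
        have : 0 ≤ V / A := div_nonneg hV0 hA0.le
        rw [htdef]; linarith
      have ht1 : t < 1 := by
        have : V / A < 1 := (div_lt_one hA0).mpr hVA
        rw [htdef]; linarith
      have htV : V < t * A := by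
        have : t * A = (V + A) / 2 := by rw [htdef]; field_simp
        rw [this]; linarith
      set w : Fin m → ℝ := fun i => t * a i with hwdef
      have hw0 : (0 : Fin m → ℝ) ≤ w := fun i => mul_nonneg ht0.le (ha0 i)
      have hwev : ∀ᶠ k in atTop, w ≤ x (φ k) := by
        have : ∀ᶠ k in atTop, ∀ i, w i ≤ x (φ k) i := by
          rw [eventually_all]
          intro i
          rcases eq_or_lt_of_le (ha0 i) with h0 | h0
          · refine Eventually.of_forall fun k => ?_
            have h0' : a i = 0 := by simpa using h0.symm
            rw [hwdef]; dsimp only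
            rw [h0', mul_zero]
            exact (hxmem (φ k)).1 i
          · have h0' : (0 : ℝ) < a i := by simpa using h0
            have hlt : t * a i < a i := by nlinarith
            refine ((hxc i).eventually (eventually_gt_nhds hlt)).mono fun k hk => le_of_lt hk
        exact this.mono fun k hk i => hk i
      have hfreqw : ∃ᶠ k in atTop, g (L (φ k + N₀)) w ≤ 1 :=
        (hwev.mono fun k h =>
          (hmono _ w _ hw0 h).trans (hgz (φ k + N₀))).frequently
      have hgw : glim w ≤ 1 := key _ hL' w hw0 hfreqw
      have hvw : val w ≤ vstar := le_biSup _ ⟨hw0, hgw⟩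
      have hwsum : ∑ i, c i * w i = t * ∑ i, c i * a i := by
        rw [Finset.mul_sum]
        exact Finset.sum_congr rfl fun i _ => by rw [hwdef]; ring
      have : vstar < val w := by
        rw [hvaldef]; dsimp only
        rw [hwsum]
        refine (ENNReal.lt_ofReal_iff_toReal_lt hvstop).mpr ?_
        have : t * A ≤ t * ∑ i, c i * a i := by nlinarith
        linarith
      exact absurd hvw (not_le.2 this)
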